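/- If u : E → F is a nuclear linear operator and φ ∈ F' is a nonzero continuous functional, then for every n ≥ 1 the n-homogeneous polynomial P(x) = φ(u(x))^{n-1} u(x) is a nuclear polynomial. (Indeed P = Q ∘ u with Q(y) = φ(y)^{n-1} y, so P factors through a nuclear operator, and every polynomial factoring through a nuclear operator is nuclear.) -/

import Mathlib

open Finset Matrix


private lemma polar_coeffs (𝕜 : Type) [RCLike 𝕜] (n : ℕ) (hn : 1 ≤ n) :
    ∃ c : Fin (n+1) → 𝕜, ∀ a b : 𝕜,
      ∑ j : Fin (n+1), c j * (a + (j : ℕ) * b) ^ n = a ^ (n-1) * b := by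
  set v : Fin (n+1) → 𝕜 := fun j => ((j : ℕ) : 𝕜) with hv
  have hdet : IsUnit (Matrix.vandermonde v)ᵀ.det := by
    rw [Matrix.det_transpose, Matrix.det_vandermonde]
    rw [isUnit_iff_ne_zero, Finset.prod_ne_zero_iff]
    intro i _
    rw [Finset.prod_ne_zero_iff]
    intro j hj
    have hij : i < j := Finset.mem_Ioi.mp hj
    have hij' : (i : ℕ) < (j : ℕ) := hij
    have : v i ≠ v j := by
      show ((i:ℕ):𝕜) ≠ ((j:ℕ):𝕜)
      exact_mod_cast Nat.ne_of_lt hij'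
    exact sub_ne_zero.2 (Ne.symm this)
  set d : Fin (n+1) → 𝕜 := fun m => if (m : ℕ) = 1 then (n : 𝕜)⁻¹ else 0 with hd
  set c : Fin (n+1) → 𝕜 := (Matrix.vandermonde v)ᵀ⁻¹ *ᵥ d with hcdef
  have key : ∀ m : Fin (n+1), (∑ j, v j ^ (m : ℕ) * c j) = d m := by
    have h1 : (Matrix.vandermonde v)ᵀ *ᵥ c = d := by
      rw [hcdef, Matrix.mulVec_mulVec, Matrix.mul_nonsing_inv _ hdet, Matrix.one_mulVec]
    intro m
    have := congrFun h1 m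
    simpa [Matrix.mulVec, dotProduct, Matrix.transpose_apply,
      Matrix.vandermonde] using this
  refine ⟨c, fun a b => ?_⟩
  have expand : ∀ j : Fin (n+1), c j * (a + (j : ℕ) * b) ^ n
      = ∑ k ∈ range (n+1), (v j ^ (n-k) * c j) * (a ^ k * b ^ (n-k) * (n.choose k : 𝕜)) := by
    intro j
    rw [add_pow, Finset.mul_sum]
    refine Finset.sum_congr rfl fun k hk => ?_
    rw [mul_pow]
    ring
  rw [Finset.sum_congr rfl (fun j _ => expand j), Finset.sum_comm]
  have key2 : ∀ k ∈ range (n+1),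
      (∑ j : Fin (n+1), (v j ^ (n-k) * c j) * (a ^ k * b ^ (n-k) * (n.choose k : 𝕜)))
      = (if n - k = 1 then (n : 𝕜)⁻¹ else 0) * (a ^ k * b ^ (n-k) * (n.choose k : 𝕜)) := by
    intro k hk
    rw [← Finset.sum_mul]
    have := key ⟨n - k, by omega⟩
    simp only [hd] at this
    rw [this]
  rw [Finset.sum_congr rfl key2]
  rw [Finset.sum_eq_single (n-1)]
  · have h1 : n - (n-1) = 1 := by omega
    rw [h1, if_pos rfl]
    have h2 : n.choose (n-1) = n := by
      rw [Nat.choose_symm hn, Nat.choose_one_right]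
    rw [h2, pow_one]
    have hn0 : (n : 𝕜) ≠ 0 := Nat.cast_ne_zero.2 (by omega)
    field_simp
  · intro k hk hkne
    have : k < n + 1 := Finset.mem_range.1 hk
    have : n - k ≠ 1 := by omega
    rw [if_neg this, zero_mul]
  · intro h
    exact absurd (Finset.mem_range.2 (by omega)) h


/-- `u` is a nuclear operator: `u = Σ φ_i ⊗ y_i` with `Σ ‖φ_i‖‖y_i‖ < ∞`. -/
def IsNuclearOp (𝕜 : Type) [RCLike 𝕜] {E F : Type} [NormedAddCommGroup E] [NormedSpace 𝕜 E]
    [NormedAddCommGroup F] [NormedSpace 𝕜 F] (u : E → F) : Prop :=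
  ∃ (φ : ℕ → (E →L[𝕜] 𝕜)) (y : ℕ → F),
    Summable (fun i => ‖φ i‖ * ‖y i‖) ∧ ∀ x, HasSum (fun i => φ i x • y i) (u x)

/-- `P` is a nuclear `m`-homogeneous polynomial: `P x = Σ (φ_i x)^m • y_i` with
`Σ ‖φ_i‖^m ‖y_i‖ < ∞`. -/
def IsNuclearPoly (𝕜 : Type) [RCLike 𝕜] {E F : Type} [NormedAddCommGroup E] [NormedSpace 𝕜 E]
    [NormedAddCommGroup F] [NormedSpace 𝕜 F] (m : ℕ) (P : E → F) : Prop :=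
  ∃ (φ : ℕ → (E →L[𝕜] 𝕜)) (y : ℕ → F),
    Summable (fun i => ‖φ i‖ ^ m * ‖y i‖) ∧ ∀ x, HasSum (fun i => (φ i x) ^ m • y i) (P x)

set_option maxHeartbeats 1000000 in
/-- If `u : E → F` is nuclear and `φ ∈ F'` is nonzero, then for every `n ≥ 1` the
`n`-homogeneous polynomial `P(x) = φ(u x)^{n-1} • u x` is nuclear. -/
theorem nuclear_op_power_poly_nuclear {𝕜 E F : Type} [RCLike 𝕜]
    [NormedAddCommGroup E] [NormedSpace 𝕜 E] [CompleteSpace E]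
    [NormedAddCommGroup F] [NormedSpace 𝕜 F] [CompleteSpace F]
    (u : E →L[𝕜] F) (hu : IsNuclearOp 𝕜 ⇑u) (φ : F →L[𝕜] 𝕜) (hφ : φ ≠ 0)
    (n : ℕ) (hn : 1 ≤ n) :
    IsNuclearPoly 𝕜 n (fun x => (φ (u x)) ^ (n - 1) • u x) := by
  obtain ⟨θ, y, hsum, hrep⟩ := hu
  obtain ⟨c, hc⟩ := polar_coeffs 𝕜 n hn
  set ψ : E →L[𝕜] 𝕜 := φ.comp u with hψ
  set θ' : ℕ → E →L[𝕜] 𝕜 := fun i => ((‖θ i‖ : 𝕜))⁻¹ • θ i with hθ'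
  set y' : ℕ → F := fun i => ((‖θ i‖ : 𝕜)) • y i with hy'
  -- basic facts about the normalization
  have hθ'norm : ∀ i, ‖θ' i‖ ≤ 1 := by
    intro i
    refine le_trans (ContinuousLinearMap.opNorm_smul_le _ _) ?_
    rw [norm_inv, RCLike.norm_ofReal, abs_norm]
    rcases eq_or_ne ‖θ i‖ 0 with h | h
    · simp [h]
    · rw [inv_mul_cancel₀ h]
  have hθ'y' : ∀ i (x : E), θ' i x • y' i = θ i x • y i := by
    intro i x
    rcases eq_or_ne (θ i) 0 with h | h
    · simp [hθ', hy', h]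
    · have hn0 : ((‖θ i‖ : 𝕜)) ≠ 0 := by
        simpa using norm_ne_zero_iff.2 h
      simp only [hθ', hy', ContinuousLinearMap.coe_smul', Pi.smul_apply, smul_eq_mul,
        smul_smul]
      rw [mul_comm ((‖θ i‖ : 𝕜))⁻¹ (θ i x), mul_assoc, inv_mul_cancel₀ hn0, mul_one]
  have hy'norm : ∀ i, ‖y' i‖ ≤ ‖θ i‖ * ‖y i‖ := by
    intro i
    refine le_trans (norm_smul_le _ _) ?_
    rw [RCLike.norm_ofReal, abs_norm]
  -- the index equivalence
  haveI : Denumerable (ℕ × Fin (n+1)) := Denumerable.ofEncodableOfInfinite _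
  let e : ℕ ≃ (ℕ × Fin (n+1)) := (Denumerable.eqv (ℕ × Fin (n+1))).symm
  set Φ : ℕ × Fin (n+1) → E →L[𝕜] 𝕜 := fun p => ψ + (((p.2 : ℕ) : 𝕜)) • θ' p.1 with hΦ
  set Z : ℕ × Fin (n+1) → F := fun p => c p.2 • y' p.1 with hZ
  -- norm bound
  have hΦnorm : ∀ p : ℕ × Fin (n+1), ‖Φ p‖ ≤ ‖ψ‖ + n := by
    intro p
    refine le_trans (norm_add_le _ _) (add_le_add le_rfl ?_)
    refine le_trans (ContinuousLinearMap.opNorm_smul_le _ _) ?_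
    rw [RCLike.norm_natCast]
    calc ((p.2 : ℕ) : ℝ) * ‖θ' p.1‖ ≤ (n : ℝ) * 1 := by
          apply mul_le_mul _ (hθ'norm _) (norm_nonneg _) (by positivity)
          exact_mod_cast Nat.le_of_lt_succ p.2.isLt
      _ = n := mul_one _
  have hZnorm : ∀ p : ℕ × Fin (n+1), ‖Z p‖ ≤ ‖c p.2‖ * (‖θ p.1‖ * ‖y p.1‖) := by
    intro p
    refine le_trans (norm_smul_le _ _) ?_
    exact mul_le_mul_of_nonneg_left (hy'norm _) (norm_nonneg _)
  -- summability of the bound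
  have hBsum : Summable (fun p : ℕ × Fin (n+1) =>
      ((‖ψ‖ + n) ^ n * (‖θ p.1‖ * ‖y p.1‖)) * ‖c p.2‖) := by
    have h1 : Summable (fun i : ℕ => (‖ψ‖ + n) ^ n * (‖θ i‖ * ‖y i‖)) := hsum.mul_left _
    have h2 : Summable (fun j : Fin (n+1) => ‖c j‖) := Summable.of_finite
    exact Summable.mul_of_nonneg h1 h2 (fun i => by positivity) (fun j => norm_nonneg _)
  have hkey : Summable (fun p : ℕ × Fin (n+1) => ‖Φ p‖ ^ n * ‖Z p‖) := by
    refine Summable.of_nonneg_of_le (fun p => by positivity) (fun p => ?_) hBsum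
    calc ‖Φ p‖ ^ n * ‖Z p‖
        ≤ (‖ψ‖ + n) ^ n * (‖c p.2‖ * (‖θ p.1‖ * ‖y p.1‖)) := by
          apply mul_le_mul (pow_le_pow_left₀ (norm_nonneg _) (hΦnorm p) n) (hZnorm p)
            (norm_nonneg _) (by positivity)
      _ = ((‖ψ‖ + n) ^ n * (‖θ p.1‖ * ‖y p.1‖)) * ‖c p.2‖ := by ring
  refine ⟨fun i => Φ (e i), fun i => Z (e i), ?_, ?_⟩
  · exact (e.summable_iff (f := fun p => ‖Φ p‖ ^ n * ‖Z p‖)).2 hkey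
  · intro x
    set f : ℕ × Fin (n+1) → F := fun p => (Φ p x) ^ n • Z p with hf
    -- f is summable
    have hfs : Summable f := by
      apply Summable.of_norm
      refine Summable.of_nonneg_of_le (fun p => norm_nonneg _) (fun p => ?_)
        ((hkey.mul_left (‖x‖ ^ n)))
      rw [hf, norm_smul, norm_pow]
      calc ‖Φ p x‖ ^ n * ‖Z p‖ ≤ (‖Φ p‖ * ‖x‖) ^ n * ‖Z p‖ := by
            apply mul_le_mul_of_nonneg_right
              (pow_le_pow_left₀ (norm_nonneg _) ((Φ p).le_opNorm x) n) (norm_nonneg _)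
        _ = ‖x‖ ^ n * (‖Φ p‖ ^ n * ‖Z p‖) := by ring
    -- fiberwise sums
    have hfib : ∀ i : ℕ, HasSum (fun j : Fin (n+1) => f (i, j))
        ((ψ x) ^ (n-1) • (θ i x • y i)) := by
      intro i
      have := hasSum_fintype (fun j : Fin (n+1) => f (i, j))
      convert this using 1
      have hterm : ∀ j : Fin (n+1), f (i, j)
          = (c j * (ψ x + ((j : ℕ) : 𝕜) * θ' i x) ^ n) • y' i := by
        intro j
        simp only [hf, hΦ, hZ, ContinuousLinearMap.add_apply, ContinuousLinearMap.coe_smul',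
          Pi.smul_apply, smul_eq_mul, smul_smul]
        ring_nf
      rw [Finset.sum_congr rfl (fun j _ => hterm j), ← Finset.sum_smul, hc (ψ x) (θ' i x),
        ← smul_smul, hθ'y']
    -- total sum
    have htot : HasSum (fun i : ℕ => (ψ x) ^ (n-1) • (θ i x • y i)) ((ψ x) ^ (n-1) • u x) :=
      (hrep x).const_smul _
    obtain ⟨a, ha⟩ := hfs
    have h1 : HasSum (fun i : ℕ => (ψ x) ^ (n-1) • (θ i x • y i)) a :=
      ha.prod_fiberwise hfib
    have h2 : a = (ψ x) ^ (n-1) • u x := h1.unique htot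
    rw [h2] at ha
    have : HasSum (f ∘ e) ((ψ x) ^ (n-1) • u x) := (e.hasSum_iff).2 ha
    exact this
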